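/- If n : [0,∞) → ℝ satisfies n' (t) = α(t)(1 - n(t)) - β(t) n(t) with α(t) ≥ 0 and β(t) ≥ 0 continuous, and n(0) ∈ [0,1], then n(t) ∈ [0,1] for all t ≥ 0. -/

import Mathlib

open Set

lemma aux_nonneg_of_deriv (f g : ℝ → ℝ)
    (hf : ∀ t ∈ Ici (0:ℝ), HasDerivAt f (g t) t)
    (hg : ∀ t ∈ Ici (0:ℝ), f t ≤ 0 → 0 ≤ g t)
    (h0 : 0 ≤ f 0) : ∀ t ∈ Ici (0:ℝ), 0 ≤ f t := by
  intro t0 ht0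
  by_contra hneg
  push_neg at hneg
  set S : Set ℝ := {t | t ∈ Icc (0:ℝ) t0 ∧ 0 ≤ f t} with hSdef
  have hS0 : (0:ℝ) ∈ S := ⟨⟨le_refl 0, ht0⟩, h0⟩
  have hSne : S.Nonempty := ⟨0, hS0⟩
  have hSbdd : BddAbove S := ⟨t0, fun x hx => hx.1.2⟩
  obtain ⟨s, hs⟩ : ∃ s, sSup S = s := ⟨_, rfl⟩
  have hs0 : (0:ℝ) ≤ s := by rw [← hs]; exact le_csSup hSbdd hS0
  have hst0 : s ≤ t0 := by rw [← hs]; exact csSup_le hSne fun x hx => hx.1.2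
  have hcl : s ∈ closure S := by rw [← hs]; exact csSup_mem_closure hSne hSbdd
  have hfs : 0 ≤ f s := by
    have hne : (nhdsWithin s S).NeBot := mem_closure_iff_nhdsWithin_neBot.1 hcl
    have htend : Filter.Tendsto f (nhdsWithin s S) (nhds (f s)) :=
      ((hf s hs0).continuousAt.continuousWithinAt).tendsto
    exact ge_of_tendsto htend
      (Filter.eventually_of_mem self_mem_nhdsWithin fun x hx => hx.2)
  have hslt : s < t0 := lt_of_le_of_ne hst0 (by rintro rfl; exact absurd hfs (not_le.2 hneg))
  have hmono : MonotoneOn f (Icc s t0) := by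
    refine monotoneOn_of_deriv_nonneg (convex_Icc s t0) ?_ ?_ ?_
    · intro x hx
      exact ((hf x (le_trans hs0 hx.1)).continuousAt).continuousWithinAt
    · intro x hx
      rw [interior_Icc] at hx
      exact ((hf x (le_trans hs0 hx.1.le)).differentiableAt).differentiableWithinAt
    · intro x hx
      rw [interior_Icc] at hx
      have hx0 : (0:ℝ) ≤ x := le_trans hs0 hx.1.le
      have hfx : f x ≤ 0 := by
        by_contra hfx
        push_neg at hfx
        have : x ∈ S := ⟨⟨hx0, hx.2.le⟩, hfx.le⟩
        exact absurd (hs ▸ le_csSup hSbdd this) (not_le.2 hx.1)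
      rw [(hf x hx0).deriv]
      exact hg x hx0 hfx
  have : f s ≤ f t0 := hmono ⟨le_refl s, hst0⟩ ⟨hst0, le_refl t0⟩ hst0
  linarith

theorem gating_variable_stays_in_unit_interval
    (n α β : ℝ → ℝ)
    (hα_cont : ContinuousOn α (Ici 0)) (hβ_cont : ContinuousOn β (Ici 0))
    (hα_nonneg : ∀ t ∈ Ici (0:ℝ), 0 ≤ α t) (hβ_nonneg : ∀ t ∈ Ici (0:ℝ), 0 ≤ β t)
    (hode : ∀ t ∈ Ici (0:ℝ), HasDerivAt n (α t * (1 - n t) - β t * n t) t)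
    (h0 : n 0 ∈ Icc (0:ℝ) 1) :
    ∀ t ∈ Ici (0:ℝ), n t ∈ Icc (0:ℝ) 1 := by
  have hlow : ∀ t ∈ Ici (0:ℝ), 0 ≤ n t := by
    apply aux_nonneg_of_deriv n (fun t => α t * (1 - n t) - β t * n t) hode _ h0.1
    intro t ht hnt
    have hα := hα_nonneg t ht
    have hβ := hβ_nonneg t ht
    show 0 ≤ α t * (1 - n t) - β t * n t
    nlinarith
  have hhigh : ∀ t ∈ Ici (0:ℝ), 0 ≤ 1 - n t := by
    apply aux_nonneg_of_deriv (fun t => 1 - n t)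
      (fun t => -(α t * (1 - n t) - β t * n t))
    · intro t ht
      exact (hode t ht).const_sub 1
    · intro t ht hnt
      have hnt' : 1 - n t ≤ 0 := hnt
      have hα := hα_nonneg t ht
      have hβ := hβ_nonneg t ht
      show 0 ≤ -(α t * (1 - n t) - β t * n t)
      nlinarith
    · simpa using h0.2
  intro t ht
  exact ⟨hlow t ht, by linarith [hhigh t ht]⟩
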